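/- For every a ≥ 1 and every t ∈ ℝ with t ≠ 0, lim_{ε→0⁺} ∫_{−∞}^{∞} e^{−itτ} / (a² − (τ + iε)²) dτ = 2π χ_{[0,∞)}(t) · sin(t a)/a, where the integral is an (improper/oscillatory) Lebesgue integral in τ and χ_{[0,∞)} is the indicator of [0,∞). In particular, with a = √(1+|ξ|²) for ξ ∈ ℝⁿ, the kernel of the regularized Klein–Gordon resolvent converges as ε → 0⁺ to 2π χ_{[0,∞)}(t) sin(t√(1+|ξ|²))/√(1+|ξ|²). -/

import Mathlib

open MeasureTheory Real Set Filter intervalIntegral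
open scoped FourierTransform

noncomputable section

lemma laplace_int {w : ℂ} (hw : 0 < w.re) :
    IntegrableOn (fun s : ℝ => Complex.exp (-(w * s))) (Ioi 0) := by
  refine Integrable.mono' ((exp_neg_integrableOn_Ioi 0 hw))
    ((Continuous.aestronglyMeasurable (by fun_prop)).restrict) ?_
  filter_upwards with s
  simp [Complex.norm_exp]

lemma laplace_one {w : ℂ} (hw : 0 < w.re) :
    ∫ s in Ioi (0:ℝ), Complex.exp (-(w * s)) = 1 / w := by
  have hw0 : w ≠ 0 := fun h => by simp [h] at hw
  have h1 : Tendsto (fun b : ℝ => ∫ s in (0:ℝ)..b, Complex.exp (-(w * s))) atTop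
      (nhds (∫ s in Ioi (0:ℝ), Complex.exp (-(w * s)))) :=
    intervalIntegral_tendsto_integral_Ioi 0 (laplace_int hw) tendsto_id
  have h2 : Tendsto (fun b : ℝ => ∫ s in (0:ℝ)..b, Complex.exp (-(w * s))) atTop
      (nhds (1 / w)) := by
    have heq : ∀ b : ℝ, (∫ s in (0:ℝ)..b, Complex.exp (-(w * s)))
        = (Complex.exp (-w * b) - 1) / (-w) := by
      intro b
      simp_rw [← neg_mul]
      rw [integral_exp_mul_complex (neg_ne_zero.mpr hw0)]
      simp
    simp_rw [heq]
    have hexp : Tendsto (fun b : ℝ => Complex.exp (-w * b)) atTop (nhds 0) := by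
      rw [tendsto_zero_iff_norm_tendsto_zero]
      have : ∀ b : ℝ, ‖Complex.exp (-w * b)‖ = Real.exp (-w.re * b) := by
        intro b; simp [Complex.norm_exp]
      simp_rw [this]
      exact Real.tendsto_exp_atBot.comp
        (Tendsto.const_mul_atTop_of_neg (neg_neg_iff_pos.mpr hw) tendsto_id)
    have := (hexp.sub_const 1).div_const (-w)
    simpa using this
  exact tendsto_nhds_unique h1 h2

lemma laplace_sin {w : ℂ} (hw : 0 < w.re) (a : ℝ) :
    ∫ s in Ioi (0:ℝ), (Real.sin (a * s) : ℂ) * Complex.exp (-(w * s))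
      = a / (w ^ 2 + a ^ 2) := by
  have hre1 : 0 < (w + a * Complex.I).re := by simpa using hw
  have hre2 : 0 < (w - a * Complex.I).re := by simpa using hw
  have h1 : w + a * Complex.I ≠ 0 := fun h => by simp [h] at hre1
  have h2 : w - a * Complex.I ≠ 0 := fun h => by simp [h] at hre2
  have e1 : ∀ s : ℝ, (Real.sin (a * s) : ℂ) * Complex.exp (-(w * s))
      = (Complex.I / 2) * (Complex.exp (-((w + a * Complex.I) * s))
        - Complex.exp (-((w - a * Complex.I) * s))) := by
    intro s
    rw [Complex.ofReal_sin, Complex.sin,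
      show (-((w + a * Complex.I) * s) : ℂ) = -(w * s) + -(↑(a * s)) * Complex.I by
        push_cast; ring,
      show (-((w - a * Complex.I) * s) : ℂ) = -(w * s) + (↑(a * s)) * Complex.I by
        push_cast; ring,
      Complex.exp_add, Complex.exp_add]
    ring
  simp_rw [e1]
  rw [MeasureTheory.integral_const_mul, integral_sub (laplace_int hre1) (laplace_int hre2),
    laplace_one hre1, laplace_one hre2]
  have hsq : w ^ 2 + (a : ℂ) ^ 2 = (w + a * Complex.I) * (w - a * Complex.I) := by
    linear_combination ((a:ℂ)^2) * Complex.I_sq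
  rw [hsq]
  rw [div_sub_div _ _ h1 h2, eq_div_iff (mul_ne_zero h1 h2), mul_assoc,
    div_mul_cancel₀ _ (mul_ne_zero h1 h2)]
  linear_combination (-(a:ℂ)) * Complex.I_sq

lemma key (a t : ℝ) (ha : 1 ≤ a) (ht : t ≠ 0) {ε : ℝ} (hε : 0 < ε) :
    ∫ τ : ℝ, Complex.exp (-Complex.I * (t : ℂ) * (τ : ℂ)) /
        ((a : ℂ) ^ 2 - ((τ : ℂ) + Complex.I * (ε : ℂ)) ^ 2)
      = ((2 * Real.pi : ℝ) : ℂ) * (if 0 ≤ t then (1 : ℂ) else 0) *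
          ((Real.sin (t * a) : ℝ) : ℂ) * Complex.exp (-(ε : ℂ) * (t : ℂ)) / a := by
  have ha0 : (0:ℝ) < a := lt_of_lt_of_le one_pos ha
  set D : ℝ → ℂ := fun τ => (a : ℂ) ^ 2 - ((τ : ℂ) + Complex.I * (ε : ℂ)) ^ 2 with hDdef
  have hDre : ∀ τ : ℝ, (D τ).re = a ^ 2 + ε ^ 2 - τ ^ 2 := by
    intro τ
    simp [hDdef, pow_two, Complex.mul_re, Complex.mul_im]
    ring
  have hDim : ∀ τ : ℝ, (D τ).im = -(2 * τ * ε) := by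
    intro τ
    simp [hDdef, pow_two, Complex.mul_re, Complex.mul_im]
    ring
  have hD0 : ∀ τ : ℝ, D τ ≠ 0 := by
    intro τ h
    have h1 : (D τ).re = 0 := by rw [h]; simp
    have h2 : (D τ).im = 0 := by rw [h]; simp
    rw [hDre] at h1; rw [hDim] at h2
    have hτ : τ = 0 := by nlinarith
    rw [hτ] at h1; nlinarith
  set g : ℝ → ℂ := fun τ => 1 / D τ with hgdef
  have hDcont : Continuous D := by fun_prop
  have hgcont : Continuous g := continuous_const.div hDcont hD0
  have habs2 : ∀ τ : ℝ, ‖D τ‖ ^ 2 = (a ^ 2 + ε ^ 2 - τ ^ 2) ^ 2 + (2 * τ * ε) ^ 2 := by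
    intro τ
    rw [Complex.sq_norm, Complex.normSq_apply, hDre, hDim]
    ring
  set C : ℝ := 2 + (a ^ 2 + ε ^ 2 + 1) / (ε * a) with hCdef
  have hC2 : (2:ℝ) ≤ C := le_add_of_nonneg_right (by positivity)
  have hCm : a ^ 2 + ε ^ 2 + 1 ≤ C * (ε * a) := by
    have h1 : (a ^ 2 + ε ^ 2 + 1) / (ε * a) * (ε * a) = a ^ 2 + ε ^ 2 + 1 :=
      div_mul_cancel₀ _ (by positivity)
    have hCmul : C * (ε * a) = 2 * (ε * a) + (a ^ 2 + ε ^ 2 + 1) := by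
      rw [hCdef, add_mul, h1]
    nlinarith [mul_pos hε ha0]
  have hbound : ∀ τ : ℝ, ‖g τ‖ ≤ C * (1 + τ ^ 2)⁻¹ := by
    intro τ
    have hDnorm : 0 < ‖D τ‖ := norm_pos_iff.mpr (hD0 τ)
    have key2 : 1 + τ ^ 2 ≤ C * ‖D τ‖ := by
      rcases le_or_gt (τ ^ 2) (2 * (a ^ 2 + ε ^ 2) + 1) with hu | hu
      · have h2ea : 2 * ε * a ≤ ‖D τ‖ := by
          nlinarith [habs2 τ, sq_nonneg (a ^ 2 - ε ^ 2 - τ ^ 2), norm_nonneg (D τ)]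
        nlinarith
      · have hre : τ ^ 2 - (a ^ 2 + ε ^ 2) ≤ ‖D τ‖ := by
          have h1 := Complex.abs_re_le_norm (D τ)
          rw [hDre] at h1
          calc τ ^ 2 - (a ^ 2 + ε ^ 2) ≤ |a ^ 2 + ε ^ 2 - τ ^ 2| := by
                rw [abs_sub_comm]; exact le_abs_self _
            _ ≤ _ := h1
        nlinarith
    have h1 : (0:ℝ) < 1 + τ ^ 2 := by positivity
    have : ‖g τ‖ = 1 / ‖D τ‖ := by rw [hgdef]; simp
    rw [this, div_le_iff₀ hDnorm]
    calc C * (1 + τ ^ 2)⁻¹ * ‖D τ‖ = (C * ‖D τ‖) * (1 + τ ^ 2)⁻¹ := by ring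
      _ ≥ (1 + τ ^ 2) * (1 + τ ^ 2)⁻¹ := by gcongr
      _ = 1 := mul_inv_cancel₀ h1.ne'
  have hg_int : Integrable g := by
    refine Integrable.mono' ((integrable_inv_one_add_sq).const_mul C)
      hgcont.aestronglyMeasurable ?_
    filter_upwards with τ using hbound τ
  set F : ℝ → ℂ := fun s => (Real.sin (a * s) : ℂ) * Complex.exp (-((ε:ℂ) * s)) / a
    with hFdef
  have hFcont : Continuous F := by fun_prop
  set h : ℝ → ℂ := Set.indicator (Ioi 0) F with hhdef
  have hh_int : Integrable h := by
    rw [hhdef, integrable_indicator_iff measurableSet_Ioi]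
    refine Integrable.mono' (((exp_neg_integrableOn_Ioi 0 hε)).const_mul (1 / a))
      hFcont.aestronglyMeasurable.restrict ?_
    filter_upwards with s
    have h1 : ‖F s‖ = |Real.sin (a * s)| * Real.exp (-(ε * s)) / a := by
      rw [hFdef]
      simp [Complex.norm_exp, abs_of_pos ha0, map_div₀,
        -Complex.ofReal_sin]
    rw [h1]
    have h2 : |Real.sin (a * s)| ≤ 1 := abs_sin_le_one _
    have h3 : (0:ℝ) < Real.exp (-(ε * s)) := Real.exp_pos _
    rw [div_le_iff₀ ha0, neg_mul]
    calc |Real.sin (a * s)| * Real.exp (-(ε * s)) ≤ 1 * Real.exp (-(ε * s)) := by gcongr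
      _ = 1 / a * Real.exp (-(ε * s)) * a := by field_simp
  have hFh : ∀ ξ : ℝ, 𝓕 h ξ = g (-(2 * Real.pi * ξ)) := by
    intro ξ
    set w : ℂ := (ε : ℂ) + (2 * Real.pi * ξ) * Complex.I with hwdef
    have hw : 0 < w.re := by simp [hwdef, hε]
    rw [Real.fourier_real_eq_integral_exp_smul]
    calc (∫ v : ℝ, Complex.exp (↑(-2 * Real.pi * v * ξ) * Complex.I) • h v)
        = ∫ v in Ioi (0:ℝ), Complex.exp (↑(-2 * Real.pi * v * ξ) * Complex.I) * F v := by
          rw [← MeasureTheory.integral_indicator measurableSet_Ioi]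
          congr 1; funext v
          by_cases hv : v ∈ Ioi (0:ℝ)
          · simp [hhdef, Set.indicator_of_mem hv, smul_eq_mul]
          · simp [hhdef, Set.indicator_of_notMem hv]
      _ = (∫ v in Ioi (0:ℝ), (Real.sin (a * v) : ℂ) * Complex.exp (-(w * v))) / a := by
          rw [← MeasureTheory.integral_div]
          congr 1; funext v
          have hexp : Complex.exp (↑(-2 * Real.pi * v * ξ) * Complex.I)
              * Complex.exp (-((ε:ℂ) * v)) = Complex.exp (-(w * v)) := by
            rw [← Complex.exp_add]; congr 1; rw [hwdef]; push_cast; ring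
          rw [hFdef, ← hexp]; ring
      _ = (↑a / (w ^ 2 + ↑a ^ 2)) / a := by rw [laplace_sin hw a]
      _ = g (-(2 * Real.pi * ξ)) := by
          have hDw : D (-(2 * Real.pi * ξ)) = w ^ 2 + (a:ℂ) ^ 2 := by
            rw [hDdef, hwdef]; push_cast
            linear_combination (-((2 * (Real.pi:ℂ) * (ξ:ℂ)) ^ 2 + (ε:ℂ) ^ 2)) * Complex.I_sq
          have hne : w ^ 2 + (a:ℂ) ^ 2 ≠ 0 := hDw ▸ hD0 _
          rw [hgdef]
          simp only
          rw [hDw]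
          rw [div_right_comm, div_self (Complex.ofReal_ne_zero.mpr ha0.ne')]
  have hFh_int : Integrable (𝓕 h) := by
    have heq : 𝓕 h = fun ξ => g ((-(2 * Real.pi)) * ξ) := by
      funext ξ
      rw [hFh ξ]
      congr 1; ring
    rw [heq]
    exact (integrable_comp_mul_left_iff g
      (neg_ne_zero.mpr (by positivity))).mpr hg_int
  have hcont : ContinuousAt h t := by
    rcases ht.lt_or_gt with htneg | htpos
    · have hev : h =ᶠ[nhds t] (fun _ => 0) :=
        Filter.eventuallyEq_of_mem (Iio_mem_nhds htneg) (fun x hx => by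
          simp only [hhdef]
          exact Set.indicator_of_notMem (by simp only [mem_Ioi, not_lt]; exact le_of_lt hx) F)
      exact (continuousAt_const (y := (0:ℂ))).congr hev.symm
    · have hev : h =ᶠ[nhds t] F :=
        Filter.eventuallyEq_of_mem (Ioi_mem_nhds htpos) (fun x hx => Set.indicator_of_mem hx F)
      exact (hFcont.continuousAt).congr hev.symm
  have hinv : 𝓕⁻ (𝓕 h) t = h t := hh_int.fourierInv_fourier_eq hFh_int hcont
  set G : ℝ → ℂ := fun τ => Complex.exp (-Complex.I * (t:ℂ) * (τ:ℂ)) * g τ with hGdef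
  have hGeq : (fun τ : ℝ => Complex.exp (-Complex.I * (t:ℂ) * (τ:ℂ)) / D τ) = G := by
    funext τ
    rw [hGdef, hgdef]
    simp only [mul_one_div]
  have h2π : (0:ℝ) < 2 * Real.pi := by positivity
  have hsub : ∫ x : ℝ, G ((-(2 * Real.pi)) * x) = |(-(2 * Real.pi))⁻¹| • ∫ τ, G τ :=
    MeasureTheory.Measure.integral_comp_mul_left G _
  have hpi : |(-(2 * Real.pi))⁻¹| = (2 * Real.pi)⁻¹ := by
    rw [abs_inv, abs_neg, abs_of_pos h2π]
  have hmain : ∫ τ : ℝ, G τ = (2 * Real.pi : ℝ) • ∫ x : ℝ, G ((-(2 * Real.pi)) * x) := by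
    rw [hsub, hpi, smul_smul, mul_inv_cancel₀ h2π.ne', one_smul]
  have hGx : ∀ x : ℝ, G ((-(2 * Real.pi)) * x)
      = Complex.exp (↑(-2 * Real.pi * x * (-t)) * Complex.I) • 𝓕 h x := by
    intro x
    rw [hFh x, hGdef, smul_eq_mul]
    simp only
    rw [show (-(2 * Real.pi)) * x = -(2 * Real.pi * x) by ring]
    congr 1
    push_cast
    ring
  have hG2 : ∫ x : ℝ, G ((-(2 * Real.pi)) * x) = 𝓕 (𝓕 h) (-t) := by
    rw [Real.fourier_real_eq_integral_exp_smul]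
    exact MeasureTheory.integral_congr_ae (Filter.Eventually.of_forall hGx)
  have hG3 : 𝓕 (𝓕 h) (-t) = h t := by
    rw [← Real.fourierInv_eq_fourier_neg]
    exact hinv
  rw [hGeq, hmain, hG2, hG3]
  by_cases hts : 0 ≤ t
  · have htpos : 0 < t := lt_of_le_of_ne hts (Ne.symm ht)
    rw [hhdef, Set.indicator_of_mem (mem_Ioi.mpr htpos), hFdef]
    simp only [if_pos hts]
    rw [Complex.real_smul]
    rw [show a * t = t * a by ring]
    push_cast
    ring
  · have htneg : t < 0 := lt_of_not_ge hts
    rw [hhdef, Set.indicator_of_notMem (by simp only [mem_Ioi, not_lt]; exact le_of_lt htneg) F]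
    simp [if_neg hts]

/-- For `a ≥ 1` and `t ≠ 0`,
`lim_{ε→0⁺} ∫_ℝ e^{-itτ}/(a² - (τ+iε)²) dτ = 2π χ_{[0,∞)}(t) sin(ta)/a`. -/
theorem kg_resolvent_kernel_limit (a t : ℝ) (ha : 1 ≤ a) (ht : t ≠ 0) :
    Filter.Tendsto
      (fun ε : ℝ => ∫ τ : ℝ,
        Complex.exp (-Complex.I * (t : ℂ) * (τ : ℂ)) /
          ((a : ℂ) ^ 2 - ((τ : ℂ) + Complex.I * (ε : ℂ)) ^ 2))
      (nhdsWithin 0 (Set.Ioi 0))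
      (nhds (((2 * Real.pi : ℝ) : ℂ) * (if 0 ≤ t then (1 : ℂ) else 0) *
        ((Real.sin (t * a) : ℝ) : ℂ) / (a : ℂ))) := by
  set Φ : ℝ → ℂ := fun ε => ((2 * Real.pi : ℝ) : ℂ) * (if 0 ≤ t then (1 : ℂ) else 0) *
      ((Real.sin (t * a) : ℝ) : ℂ) * Complex.exp (-(ε : ℂ) * (t : ℂ)) / a with hΦ
  have hev : (fun ε : ℝ => ∫ τ : ℝ,
        Complex.exp (-Complex.I * (t : ℂ) * (τ : ℂ)) /
          ((a : ℂ) ^ 2 - ((τ : ℂ) + Complex.I * (ε : ℂ)) ^ 2))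
      =ᶠ[nhdsWithin 0 (Set.Ioi 0)] Φ := by
    filter_upwards [self_mem_nhdsWithin] with ε hε
    exact key a t ha ht hε
  rw [Filter.tendsto_congr' hev]
  have hΦcont : Continuous Φ := by fun_prop
  have h0 : Φ 0 = ((2 * Real.pi : ℝ) : ℂ) * (if 0 ≤ t then (1 : ℂ) else 0) *
      ((Real.sin (t * a) : ℝ) : ℂ) / a := by
    simp [hΦ]
  exact h0 ▸ ((hΦcont.tendsto 0).mono_left nhdsWithin_le_nhds)
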